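/- Let $\lambda > 0$ and $h(x,v) = \frac{\varepsilon}{2} M\left(\cos(\lambda^{1/4}(v-v_0))\cos(\lambda^{1/4}(x-x_0)) + 1\right)$ on the ball $B_\rho(x_0,v_0)$ where $\lambda^{1/4}\rho \le \pi/2$. Then the function $F(x,v,t) = e^{-\lambda t} h(x - vt, v)$ satisfies $F_t + vF_x - F_{vv} \le 0$ on the region where $|t| \le 1$ and the argument stays in $B_\rho$, provided $h_{vv} + t^2 h_{xx} - 2t h_{xt'} \ge -\lambda h$ holds (where derivatives are evaluated on the shifted profile), which is satisfied for $\lambda = (2\pi/\rho)^4$ sufficiently large. -/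

import Mathlib

lemma hdCos1 (a b y : ℝ) :
    HasDerivAt (fun z : ℝ => Real.cos (a * (z - b))) (-(a * Real.sin (a * (y - b)))) y := by
  have h1 : HasDerivAt (fun z : ℝ => a * (z - b)) a y := by
    simpa using ((hasDerivAt_id y).sub_const b).const_mul a
  have h2 := (Real.hasDerivAt_cos (a * (y - b))).comp y h1
  exact h2.congr_deriv (by ring)

lemma hdSin1 (a b y : ℝ) :
    HasDerivAt (fun z : ℝ => Real.sin (a * (z - b))) (a * Real.cos (a * (y - b))) y := by
  have h1 : HasDerivAt (fun z : ℝ => a * (z - b)) a y := by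
    simpa using ((hasDerivAt_id y).sub_const b).const_mul a
  have h2 := (Real.hasDerivAt_sin (a * (y - b))).comp y h1
  exact h2.congr_deriv (by ring)

lemma hdCos2 (a x w b y : ℝ) :
    HasDerivAt (fun z : ℝ => Real.cos (a * (x - z * w - b)))
      (a * w * Real.sin (a * (x - y * w - b))) y := by
  have h1 : HasDerivAt (fun z : ℝ => a * (x - z * w - b)) (-(a * w)) y := by
    have h0 : HasDerivAt (fun z : ℝ => x - z * w - b) (-w) y := by
      simpa using (((hasDerivAt_id y).mul_const w).const_sub x).sub_const b
    have := h0.const_mul a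
    exact this.congr_deriv (by ring)
  have h2 := (Real.hasDerivAt_cos (a * (x - y * w - b))).comp y h1
  exact h2.congr_deriv (by ring)

lemma hdSin2 (a x w b y : ℝ) :
    HasDerivAt (fun z : ℝ => Real.sin (a * (x - z * w - b)))
      (-(a * w * Real.cos (a * (x - y * w - b)))) y := by
  have h1 : HasDerivAt (fun z : ℝ => a * (x - z * w - b)) (-(a * w)) y := by
    have h0 : HasDerivAt (fun z : ℝ => x - z * w - b) (-w) y := by
      simpa using (((hasDerivAt_id y).mul_const w).const_sub x).sub_const b
    have := h0.const_mul a
    exact this.congr_deriv (by ring)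
  have h2 := (Real.hasDerivAt_sin (a * (x - y * w - b))).comp y h1
  exact h2.congr_deriv (by ring)

lemma hdCos3 (a x w b y : ℝ) :
    HasDerivAt (fun z : ℝ => Real.cos (a * (x - w * z - b)))
      (a * w * Real.sin (a * (x - w * y - b))) y := by
  have h1 : HasDerivAt (fun z : ℝ => a * (x - w * z - b)) (-(a * w)) y := by
    have h0 : HasDerivAt (fun z : ℝ => x - w * z - b) (-w) y := by
      simpa using (((hasDerivAt_id y).const_mul w).const_sub x).sub_const b
    have := h0.const_mul a
    exact this.congr_deriv (by ring)
  have h2 := (Real.hasDerivAt_cos (a * (x - w * y - b))).comp y h1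
  exact h2.congr_deriv (by ring)

lemma hdCos4 (a s b y : ℝ) :
    HasDerivAt (fun z : ℝ => Real.cos (a * (z - s - b)))
      (-(a * Real.sin (a * (y - s - b)))) y := by
  have h1 : HasDerivAt (fun z : ℝ => a * (z - s - b)) a y := by
    simpa using (((hasDerivAt_id y).sub_const s).sub_const b).const_mul a
  have h2 := (Real.hasDerivAt_cos (a * (y - s - b))).comp y h1
  exact h2.congr_deriv (by ring)

/-- The product-cosine profile used to build a transported sub-solution. -/
noncomputable def cosProfile (ε M lam x₀ v₀ : ℝ) (x v : ℝ) : ℝ :=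
  ε / 2 * M * (Real.cos (lam ^ ((1:ℝ)/4) * (v - v₀)) * Real.cos (lam ^ ((1:ℝ)/4) * (x - x₀)) + 1)

/-- Substituting `F(x,v,t) = e^{-λt} h(x - vt, v)` into the Fokker–Planck operator:
wherever the profile inequality `h_vv + t² h_xx - 2t h_xv ≥ -λ h` holds (evaluated
at the shifted point `(x - vt, v)`, in the ball and for `|t| ≤ 1`), the function `F`
satisfies `F_t + v F_x - F_vv ≤ 0`. -/
theorem stmt_16 (ε M lam ρ x₀ v₀ : ℝ) (hε : 0 < ε) (hM : 0 < M) (hlam : 0 < lam)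
    (hρ : 0 < ρ) (hρlam : lam ^ ((1:ℝ)/4) * ρ ≤ Real.pi / 2) :
    ∀ x v t : ℝ, |t| ≤ 1 →
      ((x - v * t, v) : ℝ × ℝ) ∈ Metric.ball ((x₀, v₀) : ℝ × ℝ) ρ →
      (deriv (deriv (fun v' => cosProfile ε M lam x₀ v₀ (x - v * t) v')) v +
          t ^ 2 * deriv (deriv (fun x' => cosProfile ε M lam x₀ v₀ x' v)) (x - v * t) -
          2 * t * deriv (fun v' =>
            deriv (fun x' => cosProfile ε M lam x₀ v₀ x' v') (x - v * t)) v ≥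
        -lam * cosProfile ε M lam x₀ v₀ (x - v * t) v) →
      deriv (fun τ => Real.exp (-lam * τ) * cosProfile ε M lam x₀ v₀ (x - v * τ) v) t +
          v * deriv (fun x' =>
            Real.exp (-lam * t) * cosProfile ε M lam x₀ v₀ (x' - v * t) v) x -
          deriv (deriv (fun v' =>
            Real.exp (-lam * t) * cosProfile ε M lam x₀ v₀ (x - v' * t) v')) v ≤ 0 := by
  intro x v t ht hball hQ
  simp only [cosProfile] at hQ ⊢
  set a := lam ^ ((1:ℝ)/4) with ha
  set c := ε / 2 * M with hc
  -- abbreviations for the fixed-point trig values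
  -- E1 / D1 : second v-derivative of the profile
  have E1 : deriv (fun v' => c * (Real.cos (a * (v' - v₀)) * Real.cos (a * (x - v * t - x₀)) + 1))
      = fun v' => c * (-(a * Real.sin (a * (v' - v₀))) * Real.cos (a * (x - v * t - x₀))) := by
    funext y
    exact ((((hdCos1 a v₀ y).mul_const _).add_const 1).const_mul c).deriv
  have D1 : deriv (fun v' => c * (-(a * Real.sin (a * (v' - v₀))) * Real.cos (a * (x - v * t - x₀)))) v
      = c * (-(a * (a * Real.cos (a * (v - v₀)))) * Real.cos (a * (x - v * t - x₀))) :=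
    ((((hdSin1 a v₀ v).const_mul a).neg.mul_const _).const_mul c).deriv
  -- E2 / D2 : second x-derivative of the profile
  have E2 : deriv (fun x' => c * (Real.cos (a * (v - v₀)) * Real.cos (a * (x' - x₀)) + 1))
      = fun x' => c * (Real.cos (a * (v - v₀)) * -(a * Real.sin (a * (x' - x₀)))) := by
    funext y
    exact ((((hdCos1 a x₀ y).const_mul (Real.cos (a * (v - v₀)))).add_const 1).const_mul c).deriv
  have D2 : deriv (fun x' => c * (Real.cos (a * (v - v₀)) * -(a * Real.sin (a * (x' - x₀))))) (x - v * t)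
      = c * (Real.cos (a * (v - v₀)) * -(a * (a * Real.cos (a * (x - v * t - x₀))))) :=
    ((((hdSin1 a x₀ (x - v * t)).const_mul a).neg.const_mul (Real.cos (a * (v - v₀)))).const_mul c).deriv
  -- E3 / D3 : mixed derivative
  have E3 : (fun v' => deriv (fun x' => c * (Real.cos (a * (v' - v₀)) * Real.cos (a * (x' - x₀)) + 1)) (x - v * t))
      = fun v' => c * (Real.cos (a * (v' - v₀)) * -(a * Real.sin (a * (x - v * t - x₀)))) := by
    funext y
    exact ((((hdCos1 a x₀ (x - v * t)).const_mul (Real.cos (a * (y - v₀)))).add_const 1).const_mul c).deriv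
  have D3 : deriv (fun v' => c * (Real.cos (a * (v' - v₀)) * -(a * Real.sin (a * (x - v * t - x₀))))) v
      = c * (-(a * Real.sin (a * (v - v₀))) * -(a * Real.sin (a * (x - v * t - x₀)))) :=
    (((hdCos1 a v₀ v).mul_const _).const_mul c).deriv
  rw [E1, D1, E2, D2, E3, D3] at hQ
  -- T1 : time derivative
  have hexp : HasDerivAt (fun τ : ℝ => Real.exp (-lam * τ)) (Real.exp (-lam * t) * -lam) t := by
    have h0 : HasDerivAt (fun τ : ℝ => -lam * τ) (-lam) t := by
      simpa using (hasDerivAt_id t).const_mul (-lam)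
    exact (Real.hasDerivAt_exp (-lam * t)).comp t h0
  have T1 : deriv (fun τ => Real.exp (-lam * τ) * (c * (Real.cos (a * (v - v₀)) * Real.cos (a * (x - v * τ - x₀)) + 1))) t
      = Real.exp (-lam * t) * -lam * (c * (Real.cos (a * (v - v₀)) * Real.cos (a * (x - v * t - x₀)) + 1))
        + Real.exp (-lam * t) * (c * (Real.cos (a * (v - v₀)) * (a * v * Real.sin (a * (x - v * t - x₀))))) :=
    (hexp.mul ((((hdCos3 a x v x₀ t).const_mul (Real.cos (a * (v - v₀)))).add_const 1).const_mul c)).deriv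
  -- T2 : x derivative
  have T2 : deriv (fun x' => Real.exp (-lam * t) * (c * (Real.cos (a * (v - v₀)) * Real.cos (a * (x' - v * t - x₀)) + 1))) x
      = Real.exp (-lam * t) * (c * (Real.cos (a * (v - v₀)) * -(a * Real.sin (a * (x - v * t - x₀))))) :=
    (((((hdCos4 a (v * t) x₀ x).const_mul (Real.cos (a * (v - v₀)))).add_const 1).const_mul c).const_mul (Real.exp (-lam * t))).deriv
  -- T3 : second v derivative of the transported function
  have E4 : deriv (fun v' => Real.exp (-lam * t) * (c * (Real.cos (a * (v' - v₀)) * Real.cos (a * (x - v' * t - x₀)) + 1)))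
      = fun v' => Real.exp (-lam * t) * (c * (-(a * Real.sin (a * (v' - v₀))) * Real.cos (a * (x - v' * t - x₀))
          + Real.cos (a * (v' - v₀)) * (a * t * Real.sin (a * (x - v' * t - x₀))))) := by
    funext y
    exact (((((hdCos1 a v₀ y).mul (hdCos2 a x t x₀ y)).add_const 1).const_mul c).const_mul (Real.exp (-lam * t))).deriv
  have D4 : deriv (fun v' => Real.exp (-lam * t) * (c * (-(a * Real.sin (a * (v' - v₀))) * Real.cos (a * (x - v' * t - x₀))
          + Real.cos (a * (v' - v₀)) * (a * t * Real.sin (a * (x - v' * t - x₀)))))) v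
      = Real.exp (-lam * t) * (c * ((-(a * (a * Real.cos (a * (v - v₀)))) * Real.cos (a * (x - v * t - x₀))
            + -(a * Real.sin (a * (v - v₀))) * (a * t * Real.sin (a * (x - v * t - x₀))))
          + (-(a * Real.sin (a * (v - v₀))) * (a * t * Real.sin (a * (x - v * t - x₀)))
            + Real.cos (a * (v - v₀)) * (a * t * -(a * t * Real.cos (a * (x - v * t - x₀))))))) := by
    have hf1 := (((hdSin1 a v₀ v).const_mul a).neg).mul (hdCos2 a x t x₀ v)
    have hf2 := (hdCos1 a v₀ v).mul ((hdSin2 a x t x₀ v).const_mul (a * t))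
    exact (((hf1.add hf2).const_mul c).const_mul (Real.exp (-lam * t))).deriv
  rw [T1, T2, E4, D4]
  nlinarith [mul_le_mul_of_nonneg_left hQ (Real.exp_pos (-lam * t)).le]
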